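/- Let Ω ⊂ ℝ³ be a nonempty open bounded set. Suppose that 𝒜(Ω) is nonempty and that ρ := inf{ r > 0 : some ball of radius r belongs to 𝒜(Ω) } is strictly positive. Then the infimum is attained: there exist x ∈ ℝ³ and points y, z ∈ ∂Ω with |y − x| = |z − x| = ρ, the angle between y − x and z − x at least π/4, and B(x,ρ) ⊆ Ω; i.e., B(x,ρ) ∈ 𝒜(Ω). -/

import Mathlib

open Metric Set EuclideanGeometry

noncomputable abbrev E3 := EuclideanSpace ℝ (Fin 3)

/-- `memA Ω x r` says that the open ball `B(x,r)` belongs to the family `𝒜(Ω)`: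
it is contained in `Ω` and touches `∂Ω` at two points `y, z` with
`∠ y x z ≥ π/4`. -/
def memA (Ω : Set E3) (x : E3) (r : ℝ) : Prop :=
  ball x r ⊆ Ω ∧ ∃ y z : E3, y ∈ frontier Ω ∧ z ∈ frontier Ω ∧
    dist y x = r ∧ dist z x = r ∧ Real.pi / 4 ≤ ∠ y x z

theorem exists_minimal_ball_in_A
    (Ω : Set E3) (hΩo : IsOpen Ω) (hΩb : Bornology.IsBounded Ω) (hΩne : Ω.Nonempty)
    (ρ : ℝ) (hρ : ρ = sInf {r : ℝ | 0 < r ∧ ∃ x : E3, memA Ω x r})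
    (hne : {r : ℝ | 0 < r ∧ ∃ x : E3, memA Ω x r}.Nonempty)
    (hρpos : 0 < ρ) :
    ∃ x : E3, memA Ω x ρ := by
  set S : Set ℝ := {r : ℝ | 0 < r ∧ ∃ x : E3, memA Ω x r} with hS
  have hbdd : BddBelow S := ⟨0, fun r hr => hr.1.le⟩
  -- choose approximating sequence
  have hseq : ∀ n : ℕ, ∃ r : ℝ, r ∈ S ∧ r < ρ + 1 / (n + 1) := by
    intro n
    have hε : (0:ℝ) < 1 / (n + 1) := by positivity
    obtain ⟨r, hrS, hr⟩ := Real.lt_sInf_add_pos hne hε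
    exact ⟨r, hrS, by rwa [← hρ] at hr⟩
  choose r hrS hrlt using hseq
  have hrρ : ∀ n, ρ ≤ r n := fun n => hρ ▸ csInf_le hbdd (hrS n)
  choose x hx using fun n => (hrS n).2
  choose y z hyF hzF hdy hdz hang using fun n => (hx n).2
  have hrpos : ∀ n, 0 < r n := fun n => (hrS n).1
  -- r tends to ρ
  have hrtendsto : Filter.Tendsto r Filter.atTop (nhds ρ) := by
    have h1 : Filter.Tendsto (fun n : ℕ => ρ + 1 / (n + 1)) Filter.atTop (nhds ρ) := by
      have := (tendsto_one_div_add_atTop_nhds_zero_nat :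
        Filter.Tendsto (fun n : ℕ => 1 / ((n : ℝ) + 1)) Filter.atTop (nhds 0))
      simpa using (tendsto_const_nhds (x := ρ)).add this
    exact tendsto_of_tendsto_of_tendsto_of_le_of_le tendsto_const_nhds h1 hrρ
      (fun n => (hrlt n).le)
  -- compact sets
  have hKc : IsCompact (closure Ω) := hΩb.isCompact_closure
  have hFc : IsCompact (frontier Ω) :=
    hKc.of_isClosed_subset isClosed_frontier (frontier_subset_closure)
  have hxmem : ∀ n, x n ∈ closure Ω :=
    fun n => subset_closure ((hx n).1 (mem_ball_self (hrpos n)))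
  -- extract convergent subsequence of (x,y,z)
  obtain ⟨⟨a, b, c⟩, hmem, φ, hφ, hconv⟩ :=
    (hKc.prod (hFc.prod hFc)).tendsto_subseq
      (x := fun n => (x n, y n, z n)) (fun n => ⟨hxmem n, hyF n, hzF n⟩)
  have hxa : Filter.Tendsto (fun n => x (φ n)) Filter.atTop (nhds a) :=
    (continuous_fst.tendsto _).comp hconv
  have hyb : Filter.Tendsto (fun n => y (φ n)) Filter.atTop (nhds b) :=
    ((continuous_fst.comp continuous_snd).tendsto _).comp hconv
  have hzc : Filter.Tendsto (fun n => z (φ n)) Filter.atTop (nhds c) :=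
    ((continuous_snd.comp continuous_snd).tendsto _).comp hconv
  have hrφ : Filter.Tendsto (fun n => r (φ n)) Filter.atTop (nhds ρ) :=
    hrtendsto.comp hφ.tendsto_atTop
  -- limits of distances
  have hdba : dist b a = ρ :=
    tendsto_nhds_unique (hyb.dist hxa) (by simpa [hdy] using hrφ)
  have hdca : dist c a = ρ :=
    tendsto_nhds_unique (hzc.dist hxa) (by simpa [hdz] using hrφ)
  have hbF : b ∈ frontier Ω := hmem.2.1
  have hcF : c ∈ frontier Ω := hmem.2.2
  have hba : b ≠ a := fun h => by simp [h] at hdba; linarith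
  have hca : c ≠ a := fun h => by simp [h] at hdca; linarith
  -- angle
  have hangcont : Filter.Tendsto (fun n => ∠ (y (φ n)) (x (φ n)) (z (φ n)))
      Filter.atTop (nhds (∠ b a c)) := by
    have h := Filter.Tendsto.comp
      (EuclideanGeometry.continuousAt_angle (x := (b, a, c)) hba hca)
      (hyb.prodMk_nhds (hxa.prodMk_nhds hzc))
    exact h
  have hangle : Real.pi / 4 ≤ ∠ b a c :=
    ge_of_tendsto' hangcont fun n => hang (φ n)
  -- ball inclusion
  have hball : ball a ρ ⊆ Ω := by
    intro w hw
    have hw' : dist w a < ρ := mem_ball.mp hw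
    have hlim : Filter.Tendsto (fun n => r (φ n) - dist w (x (φ n))) Filter.atTop
        (nhds (ρ - dist w a)) := hrφ.sub (tendsto_const_nhds.dist hxa)
    have hev : ∀ᶠ n in Filter.atTop, 0 < r (φ n) - dist w (x (φ n)) :=
      hlim.eventually (eventually_gt_nhds (by linarith))
    obtain ⟨n, hn⟩ := hev.exists
    exact (hx (φ n)).1 (mem_ball.mpr (by linarith))
  exact ⟨a, hball, b, c, hbF, hcF, hdba, hdca, hangle⟩
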